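/- (Unique Harder–Narasimhan type factorization of sequences.) Let τ : C → T be a weak stability function, μ : {1,…,b} → C, and γ : {1,…,b} → {1,…,c} a surjective map with i ≤ j implying γ(i) ≤ γ(j). Then there exist unique m with c ≤ m ≤ b and unique surjective maps φ : {1,…,b} → {1,…,m} and χ : {1,…,m} → {1,…,c}, each nondecreasing (i ≤ j implies φ(i) ≤ φ(j) and χ(i) ≤ χ(j)), with γ = χ∘φ, such that: (1) for each i = 1,…,m the subsequence (μ(k))_{k∈φ⁻¹(i)} is τ-semistable, and (2) setting λ(i) = Σ_{k∈φ⁻¹(i)} μ(k), for each j = 1,…,c the subsequence (λ(i))_{i∈χ⁻¹(j)} is τ-reversing. -/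

import Mathlib

open scoped Classical
open Finset Function

/-- A weak stability function on `C ⊆ A` with values in a total order:
whenever `α, γ ∈ C` (so that `β = α + γ`), either `τ α ≤ τ β ≤ τ γ` or
`τ α ≥ τ β ≥ τ γ`. -/
def WeakStability {A T : Type*} [AddCommGroup A] [LinearOrder T] (C : Set A) (τ : A → T) : Prop :=
  ∀ α γ : A, α ∈ C → γ ∈ C →
    (τ α ≤ τ (α + γ) ∧ τ (α + γ) ≤ τ γ) ∨ (τ γ ≤ τ (α + γ) ∧ τ (α + γ) ≤ τ α)

/-- Sum `κ 0 + ⋯ + κ i`. -/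
def lowSum {A : Type*} [AddCommGroup A] (κ : ℕ → A) (i : ℕ) : A :=
  ∑ j ∈ Finset.range (i + 1), κ j

/-- Sum `κ (i+1) + ⋯ + κ (n-1)`. -/
def highSum {A : Type*} [AddCommGroup A] (κ : ℕ → A) (i n : ℕ) : A :=
  ∑ j ∈ Finset.Ico (i + 1) n, κ j

/-- Condition (a) at position `i` in the definition of the coefficient `S`. -/
def SCondA {A T T' : Type*} [AddCommGroup A] [LinearOrder T] [LinearOrder T']
    (τ : A → T) (τ' : A → T') (n : ℕ) (κ : ℕ → A) (i : ℕ) : Prop :=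
  τ (κ i) ≤ τ (κ (i + 1)) ∧ τ' (highSum κ i n) < τ' (lowSum κ i)

/-- Condition (b) at position `i` in the definition of the coefficient `S`. -/
def SCondB {A T T' : Type*} [AddCommGroup A] [LinearOrder T] [LinearOrder T']
    (τ : A → T) (τ' : A → T') (n : ℕ) (κ : ℕ → A) (i : ℕ) : Prop :=
  τ (κ (i + 1)) < τ (κ i) ∧ τ' (lowSum κ i) ≤ τ' (highSum κ i n)

/-- The transformation coefficient `S({1,…,n},≤,κ,τ,τ')` for the sequence
`κ 0, …, κ (n-1)` (indexed from `0`). -/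
noncomputable def Scoeff {A T T' : Type*} [AddCommGroup A] [LinearOrder T] [LinearOrder T']
    (τ : A → T) (τ' : A → T') (n : ℕ) (κ : ℕ → A) : ℤ :=
  if ∀ i ∈ Finset.range (n - 1), SCondA τ τ' n κ i ∨ SCondB τ τ' n κ i then
    (-1) ^ ((Finset.range (n - 1)).filter (SCondA τ τ' n κ)).card
  else 0

/-- The sequence `κ 0, …, κ (n-1)` is `τ`-reversing. -/
def Reversing {A T : Type*} [AddCommGroup A] [LinearOrder T] (τ : A → T) (n : ℕ) (κ : ℕ → A) :
    Prop :=
  ∀ i, i + 1 < n → τ (κ (i + 1)) < τ (κ i)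

/-- The sequence `κ 0, …, κ (n-1)` is `τ`-semistable. -/
def Semistable {A T : Type*} [AddCommGroup A] [LinearOrder T] (τ : A → T) (n : ℕ) (κ : ℕ → A) :
    Prop :=
  ∀ i, i + 1 < n → τ (lowSum κ i) ≤ τ (highSum κ i n)

/-- Extend a `Fin n`-indexed sequence to `ℕ` by zero. -/
def toSeq {A : Type*} [AddCommGroup A] {n : ℕ} (κ : Fin n → A) : ℕ → A :=
  fun j => if h : j < n then κ ⟨j, h⟩ else 0

/-- The subsequence of `κ` on a subset `s ⊆ Fin n`, enumerated in increasing order. -/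
noncomputable def fiberSeq {A : Type*} [AddCommGroup A] {n : ℕ} (κ : Fin n → A)
    (s : Finset (Fin n)) : ℕ → A :=
  fun j => if h : j < s.card then κ (s.orderIsoOfFin rfl ⟨j, h⟩).1 else 0

/-- The transformation coefficient `U({1,…,n},≤,κ,τ,τ')`. -/
noncomputable def Ucoeff {A T T' : Type*} [AddCommGroup A] [LinearOrder T] [LinearOrder T']
    (τ : A → T) (τ' : A → T') (n : ℕ) (κ : ℕ → A) : ℚ :=
  ∑ l ∈ Finset.Icc 1 n, ∑ m ∈ Finset.Icc l n,
    ∑ p ∈ Finset.univ.filter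
        (fun p : (Fin n → Fin m) × (Fin m → Fin l) =>
          Surjective p.1 ∧ Monotone p.1 ∧ Surjective p.2 ∧ Monotone p.2),
      (if (∀ i : Fin n, τ (κ i.1) =
              τ (∑ j ∈ Finset.univ.filter (fun j : Fin n => p.1 j = p.1 i), κ j.1)) ∧
          (∀ a : Fin l,
              τ' (∑ j ∈ Finset.univ.filter (fun j : Fin n => p.2 (p.1 j) = a), κ j.1) =
              τ' (∑ j ∈ Finset.range n, κ j)) then
        (∏ a : Fin l,
          ((Scoeff τ τ' (Finset.univ.filter (fun b : Fin m => p.2 b = a)).card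
            (fiberSeq
              (fun b : Fin m => ∑ j ∈ Finset.univ.filter (fun j : Fin n => p.1 j = b), κ j.1)
              (Finset.univ.filter (fun b : Fin m => p.2 b = a)))) : ℚ))
        * ((-1 : ℚ) ^ (l - 1) / (l : ℚ))
        * ∏ b : Fin m,
            ((1 : ℚ) / (Nat.factorial (Finset.univ.filter (fun j : Fin n => p.1 j = b)).card : ℚ))
      else 0)


section HN
variable {A T : Type*} [AddCommGroup A] [LinearOrder T]

/-- sum of `ν` over `[a, b)` -/
def bS (ν : ℕ → A) (a b : ℕ) : A := ∑ j ∈ Finset.Ico a b, ν j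

/-- `ν` restricted to `[a,b)` is semistable -/
def SSb (τ : A → T) (ν : ℕ → A) (a b : ℕ) : Prop :=
  ∀ k, a < k → k < b → τ (bS ν a k) ≤ τ (bS ν k b)

variable {C : Set A} {τ : A → T} {ν : ℕ → A}

lemma bS_split (ν : ℕ → A) {a k b : ℕ} (h1 : a ≤ k) (h2 : k ≤ b) :
    bS ν a b = bS ν a k + bS ν k b := by
  rw [bS, bS, bS, Finset.sum_Ico_consecutive _ h1 h2]

lemma bS_mem (hC : ∀ x y : A, x ∈ C → y ∈ C → x + y ∈ C) {a b : ℕ}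
    (hν : ∀ j, a ≤ j → j < b → ν j ∈ C) (hab : a < b) : bS ν a b ∈ C := by
  induction b with
  | zero => omega
  | succ b ih =>
    rcases Nat.lt_or_ge a b with h | h
    · have : bS ν a (b+1) = bS ν a b + ν b := by
        rw [bS_split ν (le_of_lt h) (Nat.le_succ b)]
        congr 1
        rw [bS, Nat.succ_eq_add_one, Finset.Ico_add_one_right_eq_Icc, Finset.Icc_self, Finset.sum_singleton]
      rw [this]
      exact hC _ _ (ih (fun j hj hj' => hν j hj (by omega)) h) (hν b (by omega) (by omega))
    · have : a = b := by omega
      subst this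
      have : bS ν a (a+1) = ν a := by
        rw [bS, Finset.Ico_add_one_right_eq_Icc, Finset.Icc_self, Finset.sum_singleton]
      rw [this]; exact hν a le_rfl (by omega)

lemma seesaw (hτ : WeakStability C τ) (hC : ∀ x y : A, x ∈ C → y ∈ C → x + y ∈ C)
    {a k b : ℕ} (hν : ∀ j, a ≤ j → j < b → ν j ∈ C) (h1 : a < k) (h2 : k < b) :
    (τ (bS ν a k) ≤ τ (bS ν a b) ∧ τ (bS ν a b) ≤ τ (bS ν k b)) ∨
    (τ (bS ν k b) ≤ τ (bS ν a b) ∧ τ (bS ν a b) ≤ τ (bS ν a k)) := by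
  have hm1 : bS ν a k ∈ C := bS_mem hC (fun j hj hj' => hν j hj (by omega)) h1
  have hm2 : bS ν k b ∈ C := bS_mem hC (fun j hj hj' => hν j (by omega) hj') h2
  have := hτ _ _ hm1 hm2
  rw [← bS_split ν (le_of_lt h1) (le_of_lt h2)] at this
  tauto

lemma mid_le_max (hτ : WeakStability C τ) (hC : ∀ x y : A, x ∈ C → y ∈ C → x + y ∈ C)
    {a k b : ℕ} (hν : ∀ j, a ≤ j → j < b → ν j ∈ C) (h1 : a < k) (h2 : k < b) :
    τ (bS ν a b) ≤ max (τ (bS ν a k)) (τ (bS ν k b)) := by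
  rcases seesaw hτ hC hν h1 h2 with ⟨h, h'⟩ | ⟨h, h'⟩
  · exact le_max_of_le_right h'
  · exact le_max_of_le_left h'

lemma ss_prefix (hτ : WeakStability C τ) (hC : ∀ x y : A, x ∈ C → y ∈ C → x + y ∈ C)
    {a k b : ℕ} (hν : ∀ j, a ≤ j → j < b → ν j ∈ C) (hss : SSb τ ν a b)
    (h1 : a < k) (h2 : k < b) :
    τ (bS ν a k) ≤ τ (bS ν a b) ∧ τ (bS ν a b) ≤ τ (bS ν k b) := by
  rcases seesaw hτ hC hν h1 h2 with h | ⟨h, h'⟩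
  · exact h
  · have hk := hss k h1 h2
    constructor
    · exact le_trans hk h
    · exact le_trans h' hk

lemma ss_merge (hτ : WeakStability C τ) (hC : ∀ x y : A, x ∈ C → y ∈ C → x + y ∈ C)
    {a k b : ℕ} (hν : ∀ j, a ≤ j → j < b → ν j ∈ C)
    (hs1 : SSb τ ν a k) (hs2 : SSb τ ν k b)
    (hle : τ (bS ν a k) ≤ τ (bS ν k b)) (h1 : a < k) (h2 : k < b) :
    SSb τ ν a b := by
  intro x hx1 hx2
  have hν1 : ∀ j, a ≤ j → j < k → ν j ∈ C := fun j hj hj' => hν j hj (by omega)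
  have hν2 : ∀ j, k ≤ j → j < b → ν j ∈ C := fun j hj hj' => hν j (by omega) hj'
  rcases Nat.lt_trichotomy x k with hxk | hxk | hxk
  · -- a < x < k
    have h3 : τ (bS ν a x) ≤ τ (bS ν x k) := hs1 x hx1 hxk
    rcases seesaw hτ hC (a := x) (k := k) (b := b)
        (fun j hj hj' => hν j (by omega) hj') hxk h2 with ⟨h4, _⟩ | ⟨h4, _⟩
    · exact le_trans h3 h4
    · have h5 : τ (bS ν a x) ≤ τ (bS ν a k) := (ss_prefix hτ hC hν1 hs1 hx1 hxk).1
      exact le_trans h5 (le_trans hle h4)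
  · subst hxk; exact hle
  · -- k < x < b
    have h3 : τ (bS ν k b) ≤ τ (bS ν x b) := (ss_prefix hτ hC hν2 hs2 hxk hx2).2
    rcases seesaw hτ hC (a := a) (k := k) (b := x)
        (fun j hj hj' => hν j hj (by omega)) h1 hxk with ⟨_, h4⟩ | ⟨_, h4⟩
    · exact le_trans h4 (hs2 x hxk hx2)
    · exact le_trans h4 (le_trans hle h3)
  

end HN

section Dict
variable {n m c : ℕ}

/-- number of indices mapped below `k` -/
def sf (f : Fin n → Fin m) (k : ℕ) : ℕ :=
  (Finset.univ.filter (fun i : Fin n => (f i : ℕ) < k)).card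

lemma downClosed_mem_iff {s : Finset (Fin n)}
    (h : ∀ i j : Fin n, i ∈ s → j ≤ i → j ∈ s) (i : Fin n) : i ∈ s ↔ (i : ℕ) < s.card := by
  constructor
  · intro hi
    have hsub : Finset.Iic i ⊆ s := fun j hj => h i j hi (Finset.mem_Iic.1 hj)
    have := Finset.card_le_card hsub
    rw [Fin.card_Iic] at this; omega
  · intro hi
    by_contra hns
    have hsub : s ⊆ Finset.Iio i := by
      intro j hj
      rw [Finset.mem_Iio]
      rcases lt_or_ge j i with h' | h'
      · exact h'
      · exact absurd (h j i hj h') hns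
    have := Finset.card_le_card hsub
    rw [Fin.card_Iio] at this; omega

lemma lt_sf_iff {f : Fin n → Fin m} (hf : Monotone f) (i : Fin n) (k : ℕ) :
    (f i : ℕ) < k ↔ (i : ℕ) < sf f k := by
  refine downClosed_mem_iff (s := Finset.univ.filter (fun i : Fin n => (f i : ℕ) < k))
    (fun i' j hi' hj => ?_) i |>.symm.trans ?_ |>.symm
  · rw [Finset.mem_filter] at *
    exact ⟨Finset.mem_univ _, lt_of_le_of_lt (by exact_mod_cast hf hj) hi'.2⟩
  · simp
lemma sf_zero (f : Fin n → Fin m) : sf f 0 = 0 := by simp [sf]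

lemma sf_top (f : Fin n → Fin m) {k : ℕ} (hk : m ≤ k) : sf f k = n := by
  have : (Finset.univ.filter (fun i : Fin n => (f i : ℕ) < k)) = Finset.univ := by
    apply Finset.filter_true_of_mem; intro i _; exact lt_of_lt_of_le (f i).2 hk
  simp [sf, this]

lemma sf_mono (f : Fin n → Fin m) : Monotone (sf f) := by
  intro k k' hk
  apply Finset.card_le_card
  intro i hi
  simp only [Finset.mem_filter, Finset.mem_univ, true_and] at *
  omega

lemma sf_le (f : Fin n → Fin m) (k : ℕ) : sf f k ≤ n := by
  simpa [sf] using Finset.card_le_card (Finset.filter_subset _ (Finset.univ : Finset (Fin n)))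

lemma sf_lt {f : Fin n → Fin m} (hf : Monotone f) (hs : Surjective f) {k : ℕ} (hk : k < m) :
    sf f k < sf f (k + 1) := by
  obtain ⟨i, hi⟩ := hs ⟨k, hk⟩
  have h1 : (i : ℕ) < sf f (k+1) := by
    rw [← lt_sf_iff hf]; simp [hi]
  have h2 : ¬ ((i : ℕ) < sf f k) := by
    rw [← lt_sf_iff hf]; simp [hi]
  omega

lemma fiber_iff {f : Fin n → Fin m} (hf : Monotone f) (i : Fin n) (k : ℕ) :
    (f i : ℕ) = k ↔ sf f k ≤ (i : ℕ) ∧ (i : ℕ) < sf f (k + 1) := by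
  have h1 := lt_sf_iff hf i k
  have h2 := lt_sf_iff hf i (k+1)
  omega

lemma sf_comp {χ : Fin m → Fin c} (hχ : Monotone χ) (f : Fin n → Fin m) (j : ℕ) :
    sf (fun i => χ (f i)) j = sf f (sf χ j) := by
  unfold sf
  congr 1
  apply Finset.filter_congr
  intro i _
  simp only [eq_iff_iff]
  exact lt_sf_iff hχ (f i) j

lemma eq_of_sf_eq {f f' : Fin n → Fin m} (hf : Monotone f) (hf' : Monotone f')
    (h : ∀ k, sf f k = sf f' k) : f = f' := by
  funext i
  by_contra hne
  rcases Fin.lt_or_lt_of_ne hne with hlt | hlt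
  · have h1 : (f i : ℕ) < (f' i : ℕ) := hlt
    have := (lt_sf_iff hf i (f' i)).1 h1
    rw [h] at this
    have := (lt_sf_iff hf' i (f' i)).2 this
    omega
  · have h1 : (f' i : ℕ) < (f i : ℕ) := hlt
    have := (lt_sf_iff hf' i (f i)).1 h1
    rw [← h] at this
    have := (lt_sf_iff hf i (f i)).2 this
    omega

lemma card_filter_val_lt {t : ℕ} (ht : t ≤ n) :
    (Finset.univ.filter (fun i : Fin n => (i : ℕ) < t)).card = t := by
  have : (Finset.univ.filter (fun i : Fin n => (i : ℕ) < t))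
      = (Finset.range t).attachFin (fun m hm => lt_of_lt_of_le (Finset.mem_range.1 hm) ht) := by
    ext i; simp [Finset.mem_attachFin]
  rw [this, Finset.card_attachFin, Finset.card_range]

end Dict

section Mk
variable {n m : ℕ} {e : ℕ → ℕ}

lemma e_monoOn (hstrict : ∀ k, k < m → e k < e (k + 1)) :
    ∀ k k', k ≤ k' → k' ≤ m → e k ≤ e k' := by
  intro k k' hk hk'
  induction k' with
  | zero =>
    have hk0 : k = 0 := Nat.le_zero.1 hk
    subst hk0; exact le_rfl
  | succ k' ih =>
    rcases Nat.eq_or_lt_of_le hk with h | h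
    · exact le_of_eq (congrArg e h)
    · exact le_trans (ih (by omega) (by omega)) (le_of_lt (hstrict k' (by omega)))

noncomputable def mkMap (e : ℕ → ℕ) (m n : ℕ) (hm : 0 < m) : Fin n → Fin m :=
  fun i => ⟨Nat.findGreatest (fun k => e k ≤ (i : ℕ)) (m - 1), by
    have := Nat.findGreatest_le (P := fun k => e k ≤ (i : ℕ)) (m - 1); omega⟩

variable (he0 : e 0 = 0) (hen : e m = n) (hstrict : ∀ k, k < m → e k < e (k + 1)) (hm : 0 < m)
include he0 hen hstrict hm

lemma mkMap_fiber (i : Fin n) :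
    e ((mkMap e m n hm i : Fin m) : ℕ) ≤ (i : ℕ) ∧ (i : ℕ) < e (((mkMap e m n hm i : Fin m) : ℕ) + 1) := by
  constructor
  · exact Nat.findGreatest_spec (P := fun k => e k ≤ (i : ℕ)) (n := m - 1) (Nat.zero_le _) (le_of_eq_of_le he0 (Nat.zero_le _))
  · set fg := Nat.findGreatest (fun k => e k ≤ (i : ℕ)) (m - 1) with hfg
    show (i : ℕ) < e (fg + 1)
    rcases Nat.lt_or_ge fg (m - 1) with h | h
    · have hng : ¬ e (fg + 1) ≤ (i : ℕ) := Nat.findGreatest_is_greatest (P := fun k => e k ≤ (i : ℕ)) (n := m - 1)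
        (k := fg + 1) (by omega) (by omega)
      omega
    · have hfgm : fg = m - 1 := by
        have := Nat.findGreatest_le (P := fun k => e k ≤ (i : ℕ)) (m - 1); omega
      have : fg + 1 = m := by omega
      rw [this, hen]
      exact i.2

lemma mkMap_eq_iff {k : ℕ} (hk : k < m) (i : Fin n) :
    ((mkMap e m n hm i : Fin m) : ℕ) = k ↔ e k ≤ (i : ℕ) ∧ (i : ℕ) < e (k + 1) := by
  obtain ⟨h1, h2⟩ := mkMap_fiber he0 hen hstrict hm i
  set fg := ((mkMap e m n hm i : Fin m) : ℕ) with hfgdef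
  have hfgm : fg < m := (mkMap e m n hm i).2
  constructor
  · rintro rfl; exact ⟨h1, h2⟩
  · rintro ⟨h3, h4⟩
    rcases Nat.lt_trichotomy fg k with h | h | h
    · have : e (fg + 1) ≤ e k := e_monoOn hstrict _ _ (by omega) (by omega)
      omega
    · exact h
    · have : e (k + 1) ≤ e fg := e_monoOn hstrict _ _ (by omega) (by omega)
      omega

lemma mkMap_mono : Monotone (mkMap e m n hm) := by
  intro i i' hii
  obtain ⟨h1, _⟩ := mkMap_fiber he0 hen hstrict hm i
  have hle : e ((mkMap e m n hm i : Fin m) : ℕ) ≤ (i' : ℕ) := le_trans h1 hii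
  have hb : ((mkMap e m n hm i : Fin m) : ℕ) ≤ m - 1 :=
    Nat.findGreatest_le _
  rw [Fin.le_def]
  exact Nat.le_findGreatest hb hle

lemma mkMap_surj : Surjective (mkMap e m n hm) := by
  intro k
  have hek : e (k : ℕ) < n := by
    have h1 := hstrict k k.2
    have h2 := e_monoOn hstrict ((k : ℕ) + 1) m (by omega) le_rfl
    omega
  refine ⟨⟨e (k : ℕ), hek⟩, ?_⟩
  apply Fin.ext
  rw [mkMap_eq_iff he0 hen hstrict hm k.2]
  exact ⟨le_rfl, hstrict k k.2⟩

lemma sf_mkMap {k : ℕ} (hk : k ≤ m) :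
    sf (mkMap e m n hm) k = e k := by
  rw [sf]
  have hiff : ∀ i : Fin n, ((mkMap e m n hm i : Fin m) : ℕ) < k ↔ (i : ℕ) < e k := by
    intro i
    obtain ⟨h1, h2⟩ := mkMap_fiber he0 hen hstrict hm i
    constructor
    · intro h
      exact lt_of_lt_of_le h2 (e_monoOn hstrict _ _ (by omega) hk)
    · intro h
      by_contra hge
      have : e k ≤ e ((mkMap e m n hm i : Fin m) : ℕ) :=
        e_monoOn hstrict _ _ (by omega) (by have := (mkMap e m n hm i).2; omega)
      omega
  have : (Finset.univ.filter (fun i : Fin n => ((mkMap e m n hm i : Fin m) : ℕ) < k))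
      = (Finset.univ.filter (fun i : Fin n => (i : ℕ) < e k)) := by
    apply Finset.filter_congr; intro i _; simp [hiff i]
  rw [this]
  have hek : e k ≤ n := by rw [← hen]; exact e_monoOn hstrict _ _ hk le_rfl
  -- card_filter_val_lt
  have : (Finset.univ.filter (fun i : Fin n => (i : ℕ) < e k))
      = (Finset.range (e k)).attachFin (fun m hm => lt_of_lt_of_le (Finset.mem_range.1 hm) hek) := by
    ext i; simp [Finset.mem_attachFin]
  rw [this, Finset.card_attachFin, Finset.card_range]

end Mk

section Interval
variable {A T : Type*} [AddCommGroup A] [LinearOrder T] {n : ℕ} {s : Finset (Fin n)} {lo hi : ℕ}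

lemma interval_card (hhi : hi ≤ n)
    (hmem : ∀ i : Fin n, i ∈ s ↔ lo ≤ (i : ℕ) ∧ (i : ℕ) < hi) : s.card = hi - lo := by
  have : s = (Finset.Ico lo hi).attachFin
      (fun t ht => lt_of_lt_of_le (Finset.mem_Ico.1 ht).2 hhi) := by
    ext i; simp [hmem, Finset.mem_attachFin, Finset.mem_Ico]
  rw [this, Finset.card_attachFin, Nat.card_Ico]

lemma interval_orderIso (hhi : hi ≤ n)
    (hmem : ∀ i : Fin n, i ∈ s ↔ lo ≤ (i : ℕ) ∧ (i : ℕ) < hi)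
    {j : ℕ} (hj : j < s.card) :
    ((s.orderIsoOfFin rfl ⟨j, hj⟩ : Fin n) : ℕ) = lo + j := by
  have hcard : s.card = hi - lo := interval_card hhi hmem
  have hf : ∀ t : Fin s.card, (⟨lo + (t : ℕ), by omega⟩ : Fin n) ∈ s := by
    intro t
    rw [hmem]
    constructor
    · simp
    · have := t.2; simp; omega
  have hsm : StrictMono (fun t : Fin s.card => (⟨lo + (t : ℕ), by omega⟩ : Fin n)) := by
    intro t t' h
    simp only [Fin.mk_lt_mk]
    have : (t : ℕ) < (t' : ℕ) := h
    omega
  have := Finset.orderEmbOfFin_unique (s := s) (k := s.card) rfl hf hsm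
  have happ := congrFun this ⟨j, hj⟩
  have := Finset.coe_orderIsoOfFin_apply s (rfl : s.card = s.card) ⟨j, hj⟩
  rw [this, ← happ]

lemma fiberSeq_interval (κ : Fin n → A) (hhi : hi ≤ n)
    (hmem : ∀ i : Fin n, i ∈ s ↔ lo ≤ (i : ℕ) ∧ (i : ℕ) < hi)
    {j : ℕ} (hj : j < hi - lo) :
    fiberSeq κ s j = toSeq κ (lo + j) := by
  have hcard : s.card = hi - lo := interval_card hhi hmem
  have hj' : j < s.card := by omega
  have hlt : lo + j < n := by omega
  rw [fiberSeq, dif_pos hj', toSeq, dif_pos hlt]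
  congr 1
  exact Fin.ext (interval_orderIso hhi hmem hj')

lemma fiberSeq_zero (κ : Fin n → A)
    {j : ℕ} (hj : s.card ≤ j) : fiberSeq κ s j = 0 := by
  rw [fiberSeq, dif_neg (by omega)]

lemma sum_interval (κ : Fin n → A) (hhi : hi ≤ n)
    (hmem : ∀ i : Fin n, i ∈ s ↔ lo ≤ (i : ℕ) ∧ (i : ℕ) < hi) :
    ∑ i ∈ s, κ i = bS (toSeq κ) lo hi := by
  rw [bS]
  refine Finset.sum_bij' (i := fun (a : Fin n) (_ : a ∈ s) => (a : ℕ))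
    (j := fun (t : ℕ) (ht : t ∈ Finset.Ico lo hi) =>
      (⟨t, lt_of_lt_of_le (Finset.mem_Ico.1 ht).2 hhi⟩ : Fin n))
    (fun a ha => ?_) (fun t ht => ?_) (fun a ha => ?_) (fun t ht => ?_) (fun a ha => ?_)
  · rw [Finset.mem_Ico]; exact (hmem a).1 ha
  · rw [hmem]; exact ⟨(Finset.mem_Ico.1 ht).1, (Finset.mem_Ico.1 ht).2⟩
  · exact Fin.ext rfl
  · rfl
  · simp [toSeq, a.isLt]

lemma semistable_iff (τ : A → T) (κ : Fin n → A) (hhi : hi ≤ n) (hlo : lo ≤ hi)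
    (hmem : ∀ i : Fin n, i ∈ s ↔ lo ≤ (i : ℕ) ∧ (i : ℕ) < hi) :
    Semistable τ s.card (fiberSeq κ s) ↔ SSb τ (toSeq κ) lo hi := by
  have hcard : s.card = hi - lo := interval_card hhi hmem
  have hlow : ∀ i : ℕ, i + 1 ≤ hi - lo → lowSum (fiberSeq κ s) i = bS (toSeq κ) lo (lo + i + 1) := by
    intro i hi1
    rw [lowSum, bS, Finset.sum_Ico_eq_sum_range]
    have : lo + i + 1 - lo = i + 1 := by omega
    rw [this]
    apply Finset.sum_congr rfl
    intro j hj
    rw [Finset.mem_range] at hj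
    exact fiberSeq_interval κ hhi hmem (by omega)
  have hhigh : ∀ i : ℕ, i + 1 ≤ hi - lo →
      highSum (fiberSeq κ s) i s.card = bS (toSeq κ) (lo + i + 1) hi := by
    intro i hi1
    rw [highSum, bS, Finset.sum_Ico_eq_sum_range, Finset.sum_Ico_eq_sum_range, hcard]
    have h2 : hi - (lo + i + 1) = hi - lo - (i + 1) := by omega
    rw [h2]
    apply Finset.sum_congr rfl
    intro j hj
    rw [Finset.mem_range] at hj
    rw [fiberSeq_interval κ hhi hmem (by omega)]
    congr 1
    omega
  constructor
  · intro hss k hk1 hk2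
    have h := hss (k - lo - 1) (by omega)
    rw [hlow _ (by omega), hhigh _ (by omega)] at h
    have h3 : lo + (k - lo - 1) + 1 = k := by omega
    rwa [h3] at h
  · intro hss i hi1
    rw [hcard] at hi1
    rw [hlow _ (by omega), hhigh _ (by omega)]
    exact hss (lo + i + 1) (by omega) (by omega)

lemma reversing_iff (τ : A → T) (κ : Fin n → A) (hhi : hi ≤ n) (hlo : lo ≤ hi)
    (hmem : ∀ i : Fin n, i ∈ s ↔ lo ≤ (i : ℕ) ∧ (i : ℕ) < hi) :
    Reversing τ s.card (fiberSeq κ s) ↔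
      (∀ k, lo ≤ k → k + 1 < hi → τ (toSeq κ (k + 1)) < τ (toSeq κ k)) := by
  have hcard : s.card = hi - lo := interval_card hhi hmem
  constructor
  · intro hr k hk1 hk2
    have h := hr (k - lo) (by omega)
    rw [fiberSeq_interval κ hhi hmem (by omega), fiberSeq_interval κ hhi hmem (by omega)] at h
    have h3 : lo + (k - lo) = k := by omega
    have h4 : lo + (k - lo + 1) = k + 1 := by omega
    rwa [h3, h4] at h
  · intro hr i hi1
    rw [hcard] at hi1
    rw [fiberSeq_interval κ hhi hmem (by omega), fiberSeq_interval κ hhi hmem (by omega)]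
    have h3 : lo + (i + 1) = lo + i + 1 := by omega
    rw [h3]
    exact hr (lo + i) (by omega) (by omega)

end Interval

set_option maxHeartbeats 1000000 in
theorem stmt5 {A T : Type*} [AddCommGroup A] [LinearOrder T]
    (C : Set A) (hC : ∀ a b : A, a ∈ C → b ∈ C → a + b ∈ C) (h0 : (0 : A) ∉ C)
    (τ : A → T) (hτ : WeakStability C τ)
    (b c : ℕ) (hb : 1 ≤ b) (hc : 1 ≤ c)
    (μ : Fin b → A) (hμ : ∀ i, μ i ∈ C)
    (γ : Fin b → Fin c) (hγs : Surjective γ) (hγm : Monotone γ) :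
    ∃! p : Σ m : ℕ, (Fin b → Fin m) × (Fin m → Fin c),
      c ≤ p.1 ∧ p.1 ≤ b ∧
      Surjective p.2.1 ∧ Monotone p.2.1 ∧ Surjective p.2.2 ∧ Monotone p.2.2 ∧
      (∀ i : Fin b, γ i = p.2.2 (p.2.1 i)) ∧
      (∀ k : Fin p.1,
        Semistable τ (Finset.univ.filter (fun i : Fin b => p.2.1 i = k)).card
          (fiberSeq μ (Finset.univ.filter (fun i : Fin b => p.2.1 i = k)))) ∧
      (∀ j : Fin c,
        Reversing τ (Finset.univ.filter (fun k : Fin p.1 => p.2.2 k = j)).card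
          (fiberSeq
            (fun k : Fin p.1 => ∑ i ∈ Finset.univ.filter (fun i : Fin b => p.2.1 i = k), μ i)
            (Finset.univ.filter (fun k : Fin p.1 => p.2.2 k = j)))) := by
  classical
  -- basic facts about γ
  have hg0 : sf γ 0 = 0 := sf_zero γ
  have hgc : sf γ c = b := sf_top γ le_rfl
  have hgmono : Monotone (sf γ) := sf_mono γ
  have hglt : ∀ j, j < c → sf γ j < sf γ (j + 1) := fun j hj => sf_lt hγm hγs hj
  have hgle : ∀ j, sf γ j ≤ b := fun j => sf_le γ j
  have hgfiber : ∀ (i : Fin b) (j : ℕ),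
      (γ i : ℕ) = j ↔ sf γ j ≤ (i : ℕ) ∧ (i : ℕ) < sf γ (j + 1) :=
    fun i j => fiber_iff hγm i j
  have hνC : ∀ j, j < b → toSeq μ j ∈ C := by
    intro j hj; simp only [toSeq, dif_pos hj]; exact hμ _
  have hνCr : ∀ (x y : ℕ), y ≤ b → ∀ j, x ≤ j → j < y → toSeq μ j ∈ C := by
    intro x y hy j h1 h2; exact hνC j (by omega)
  -- the fiber-end function F
  set F : ℕ → ℕ := fun a => if h : a < b then sf γ ((γ ⟨a, h⟩ : ℕ) + 1) else b with hF_def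
  have hFval : ∀ a (h : a < b), F a = sf γ ((γ ⟨a, h⟩ : ℕ) + 1) := by
    intro a h; simp only [hF_def]; rw [dif_pos h]
  have hFgt : ∀ a, a < b → a < F a := by
    intro a h; rw [hFval a h]
    exact ((hgfiber ⟨a, h⟩ _).1 rfl).2
  have hFle : ∀ a, F a ≤ b := by
    intro a; by_cases h : a < b
    · rw [hFval a h]; exact hgle _
    · simp only [hF_def]; rw [dif_neg h]
  -- the greedy next cut
  set nc : ℕ → ℕ := fun a => Nat.findGreatest (fun x => SSb τ (toSeq μ) a x) (F a) with hnc_def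
  have hSStriv : ∀ a, SSb τ (toSeq μ) a (a + 1) := by
    intro a k h1 h2; omega
  have hncgt : ∀ a, a < b → a < nc a := by
    intro a h
    have := Nat.le_findGreatest (P := fun x => SSb τ (toSeq μ) a x) (hFgt a h) (hSStriv a)
    simp only [hnc_def]; omega
  have hncSS : ∀ a, a < b → SSb τ (toSeq μ) a (nc a) := by
    intro a h
    exact Nat.findGreatest_spec (P := fun x => SSb τ (toSeq μ) a x) (hFgt a h) (hSStriv a)
  have hncle : ∀ a, nc a ≤ F a := fun a => Nat.findGreatest_le _
  have hncmax : ∀ a x, x ≤ F a → SSb τ (toSeq μ) a x → x ≤ nc a := by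
    intro a x h1 h2
    exact Nat.le_findGreatest h1 h2
  -- the sequence of cut points
  set e : ℕ → ℕ := fun k => nc^[k] 0 with he_def
  have he0 : e 0 = 0 := rfl
  have hesucc : ∀ k, e (k + 1) = nc (e k) := by
    intro k; simp only [he_def]; rw [Function.iterate_succ_apply']
  have heleb : ∀ k, e k ≤ b := by
    intro k; induction k with
    | zero => rw [he0]; omega
    | succ k ih => rw [hesucc]; exact le_trans (hncle _) (hFle _)
  have hex : ∃ k, e k = b := by
    by_contra hne
    push_neg at hne
    have key : ∀ k, k ≤ e k ∧ e k < b := by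
      intro k
      induction k with
      | zero => refine ⟨Nat.zero_le _, ?_⟩; rw [he0]; omega
      | succ k ih =>
        have h1 : e k < nc (e k) := hncgt _ ih.2
        rw [hesucc]
        refine ⟨by omega, ?_⟩
        have h2 : nc (e k) ≤ b := le_trans (hncle _) (hFle _)
        have h3 := hne (k + 1)
        rw [hesucc] at h3
        omega
    have h4 := (key b).1
    have h5 := (key b).2
    omega
  set m := Nat.find hex with hm_def
  have hem : e m = b := Nat.find_spec hex
  have hlt_b : ∀ k, k < m → e k < b := by
    intro k hk
    have h1 : e k ≠ b := Nat.find_min hex hk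
    have := heleb k; omega
  have hestrict : ∀ k, k < m → e k < e (k + 1) := by
    intro k hk; rw [hesucc]; exact hncgt _ (hlt_b k hk)
  have hm_pos : 0 < m := by
    rcases Nat.eq_zero_or_pos m with h | h
    · exfalso; rw [h, he0] at hem; omega
    · exact h
  have hmono_e : ∀ k k', k ≤ k' → k' ≤ m → e k ≤ e k' := e_monoOn hestrict
  have heb : ∀ k, k ≤ m → e k ≤ b := fun k hk => heleb k
  have hm_le_b : m ≤ b := by
    have hke : ∀ k, k ≤ m → k ≤ e k := by
      intro k hk
      induction k with
      | zero => omega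
      | succ k ih =>
        have h1 := hestrict k (by omega)
        have h2 := ih (by omega)
        omega
    have := hke m le_rfl; omega
  have hblockSS : ∀ k, k < m → SSb τ (toSeq μ) (e k) (e (k + 1)) := by
    intro k hk; rw [hesucc]; exact hncSS _ (hlt_b k hk)
  have hblockF : ∀ k, k < m → e (k + 1) ≤ F (e k) := by
    intro k hk; rw [hesucc]; exact hncle _
  -- the strict decrease between consecutive blocks in the same fiber
  have hdec : ∀ k, k + 1 < m → e (k + 1) < F (e k) →
      τ (bS (toSeq μ) (e (k + 1)) (e (k + 1 + 1))) < τ (bS (toSeq μ) (e k) (e (k + 1))) := by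
    intro k hk hlt
    by_contra hge
    push_neg at hge
    have h1 : e k < b := hlt_b k (by omega)
    have h2 : e (k + 1) < b := hlt_b (k + 1) (by omega)
    have hFeq : F (e (k + 1)) = F (e k) := by
      rw [hFval _ h2, hFval _ h1]
      have hj := (hgfiber ⟨e k, h1⟩ _).1 rfl
      rw [hFval _ h1] at hlt
      have hvals : (γ ⟨e (k + 1), h2⟩ : ℕ) = (γ ⟨e k, h1⟩ : ℕ) := by
        rw [hgfiber]
        exact ⟨le_trans hj.1 (le_of_lt (hestrict k (by omega))), hlt⟩
      rw [hvals]
    have hmerge : SSb τ (toSeq μ) (e k) (e (k + 1 + 1)) :=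
      ss_merge hτ hC (hνCr (e k) (e (k + 1 + 1)) (heleb _))
        (hblockSS k (by omega)) (hblockSS (k + 1) hk) hge
        (hestrict k (by omega)) (hestrict (k + 1) hk)
    have h3 : e (k + 1 + 1) ≤ nc (e k) := by
      apply hncmax _ _ _ hmerge
      rw [← hFeq]
      exact hblockF (k + 1) hk
    rw [← hesucc] at h3
    have := hestrict (k + 1) hk
    omega
  -- φ and χ
  set φ : Fin b → Fin m := mkMap e m b hm_pos with hφ_def
  set χ : Fin m → Fin c := fun k => γ ⟨e (k : ℕ), hlt_b _ k.2⟩ with hχ_def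
  have hφmono : Monotone φ := by rw [hφ_def]; exact mkMap_mono he0 hem hestrict hm_pos
  have hφsurj : Surjective φ := by rw [hφ_def]; exact mkMap_surj he0 hem hestrict hm_pos
  have hφiff : ∀ (k : ℕ), k < m → ∀ i : Fin b,
      ((φ i : ℕ) = k ↔ e k ≤ (i : ℕ) ∧ (i : ℕ) < e (k + 1)) := by
    intro k hk i
    rw [hφ_def]
    exact mkMap_eq_iff he0 hem hestrict hm_pos hk i
  have hsfφ : ∀ k, sf φ k = (if k ≤ m then e k else b) := by
    intro k
    rcases le_or_gt k m with hk | hk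
    · rw [if_pos hk, hφ_def]
      exact sf_mkMap he0 hem hestrict hm_pos hk
    · rw [if_neg (by omega)]
      exact sf_top φ (by omega)
  have hχφ : ∀ i : Fin b, γ i = χ (φ i) := by
    intro i
    have hkm : ((φ i : Fin m) : ℕ) < m := (φ i).2
    obtain ⟨h1, h2⟩ := (hφiff _ hkm i).1 rfl
    have hbk : e ((φ i : ℕ)) < b := hlt_b _ hkm
    have h3 : (i : ℕ) < F (e ((φ i : ℕ))) := lt_of_lt_of_le h2 (hblockF _ hkm)
    rw [hFval _ hbk] at h3
    have hj0 := (hgfiber ⟨e ((φ i : ℕ)), hbk⟩ _).1 rfl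
    simp only [hχ_def]
    exact Fin.ext ((hgfiber i _).2 ⟨le_trans hj0.1 h1, h3⟩)
  have hχmono : Monotone χ := by
    intro k k' hkk
    simp only [hχ_def]
    apply hγm
    rw [Fin.mk_le_mk]
    exact hmono_e _ _ hkk (le_of_lt k'.2)
  have hhit : ∀ j, ∃ k, k ≤ m ∧ e k = sf γ j := by
    intro j
    have hexk : ∃ k, sf γ j ≤ e k := ⟨m, by rw [hem]; exact hgle j⟩
    have hspec : sf γ j ≤ e (Nat.find hexk) := Nat.find_spec hexk
    have hk0m : Nat.find hexk ≤ m := Nat.find_min' hexk (by rw [hem]; exact hgle j)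
    refine ⟨Nat.find hexk, hk0m, ?_⟩
    rcases Nat.eq_zero_or_pos (Nat.find hexk) with h0 | h0
    · rw [h0] at hspec ⊢; rw [he0] at hspec ⊢; omega
    · obtain ⟨k1, hk1e⟩ : ∃ k1, Nat.find hexk = k1 + 1 := ⟨Nat.find hexk - 1, by omega⟩
      have hk1 : ¬ sf γ j ≤ e k1 := Nat.find_min hexk (by omega)
      push_neg at hk1
      have hk1m : k1 < m := by omega
      have hb1 : e k1 < b := hlt_b k1 hk1m
      have hA : e (k1 + 1) ≤ sf γ j := by
        have hF1 := hblockF k1 hk1m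
        rw [hFval _ hb1] at hF1
        have hj0 := (hgfiber ⟨e k1, hb1⟩ ((γ ⟨e k1, hb1⟩ : ℕ))).1 rfl
        have hjge : (γ ⟨e k1, hb1⟩ : ℕ) + 1 ≤ j := by
          by_contra hcon
          push_neg at hcon
          have hmo := hgmono (show j ≤ (γ ⟨e k1, hb1⟩ : ℕ) by omega)
          have hj0' : sf γ ((γ ⟨e k1, hb1⟩ : ℕ)) ≤ e k1 := hj0.1
          omega
        exact le_trans hF1 (hgmono hjge)
      rw [hk1e] at hspec ⊢
      omega
  have hχsurj : Surjective χ := by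
    intro j
    obtain ⟨k, hkm, hkval⟩ := hhit (j : ℕ)
    have hkm' : k < m := by
      rcases Nat.eq_or_lt_of_le hkm with h | h
      · exfalso
        have hekb : e k = b := by rw [h]; exact hem
        have hsb : sf γ (j : ℕ) < b := by
          have := hglt (j : ℕ) j.2
          have := hgle ((j : ℕ) + 1)
          omega
        omega
      · exact h
    refine ⟨⟨k, hkm'⟩, ?_⟩
    simp only [hχ_def]
    apply Fin.ext
    refine (hgfiber _ (j : ℕ)).2 ⟨?_, ?_⟩
    · exact le_of_eq hkval.symm
    · show e k < sf γ ((j : ℕ) + 1)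
      rw [hkval]; exact hglt _ j.2
  have hc_le_m : c ≤ m := by
    have := Fintype.card_le_of_surjective χ hχsurj
    simpa using this
  -- semistability of blocks, in the fiberSeq language
  have hsemi : ∀ k : Fin m,
      Semistable τ (Finset.univ.filter (fun i : Fin b => φ i = k)).card
        (fiberSeq μ (Finset.univ.filter (fun i : Fin b => φ i = k))) := by
    intro k
    have hmemk : ∀ i : Fin b, i ∈ Finset.univ.filter (fun i : Fin b => φ i = k) ↔
        e (k : ℕ) ≤ (i : ℕ) ∧ (i : ℕ) < e ((k : ℕ) + 1) := by
      intro i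
      rw [Finset.mem_filter]
      simp only [Finset.mem_univ, true_and]
      rw [Fin.ext_iff]
      exact hφiff _ k.2 i
    rw [semistable_iff τ μ (heb _ k.2) (le_of_lt (hestrict _ k.2)) hmemk]
    exact hblockSS _ k.2
  -- reversing property, in the fiberSeq language
  have hval : ∀ t, (ht : t < m) →
      toSeq (fun k : Fin m => ∑ i ∈ Finset.univ.filter (fun i : Fin b => φ i = k), μ i) t
        = bS (toSeq μ) (e t) (e (t + 1)) := by
    intro t ht
    rw [toSeq, dif_pos ht]
    refine sum_interval μ (heb _ ht) ?_
    intro i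
    rw [Finset.mem_filter]
    simp only [Finset.mem_univ, true_and]
    rw [Fin.ext_iff]
    exact hφiff _ ht i
  have hrev : ∀ j : Fin c,
      Reversing τ (Finset.univ.filter (fun k : Fin m => χ k = j)).card
        (fiberSeq (fun k : Fin m => ∑ i ∈ Finset.univ.filter (fun i : Fin b => φ i = k), μ i)
          (Finset.univ.filter (fun k : Fin m => χ k = j))) := by
    intro j
    have hmemj : ∀ k : Fin m, k ∈ Finset.univ.filter (fun k : Fin m => χ k = j) ↔
        sf χ (j : ℕ) ≤ (k : ℕ) ∧ (k : ℕ) < sf χ ((j : ℕ) + 1) := by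
      intro k
      rw [Finset.mem_filter]
      simp only [Finset.mem_univ, true_and]
      rw [Fin.ext_iff]
      exact fiber_iff hχmono k (j : ℕ)
    rw [reversing_iff τ _ (sf_le χ _) (sf_mono χ (Nat.le_succ _)) hmemj]
    intro k hk1 hk2
    have hkm : k + 1 < m := lt_of_lt_of_le hk2 (sf_le χ _)
    have hx1 : ((χ ⟨k, by omega⟩ : Fin c) : ℕ) = (j : ℕ) :=
      (fiber_iff hχmono ⟨k, by omega⟩ (j : ℕ)).2 ⟨hk1, lt_trans (Nat.lt_succ_self k) hk2⟩
    have hx2 : ((χ ⟨k + 1, hkm⟩ : Fin c) : ℕ) = (j : ℕ) :=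
      (fiber_iff hχmono ⟨k + 1, hkm⟩ (j : ℕ)).2 ⟨le_trans hk1 (Nat.le_succ k), hk2⟩
    rw [hval (k + 1) hkm, hval k (by omega)]
    apply hdec k hkm
    have hbk : e k < b := hlt_b k (by omega)
    have hbk1 : e (k + 1) < b := hlt_b (k + 1) hkm
    rw [hFval _ hbk]
    have hg1 : (γ ⟨e k, hbk⟩ : ℕ) = (j : ℕ) := hx1
    have hg2 : (γ ⟨e (k + 1), hbk1⟩ : ℕ) = (j : ℕ) := hx2
    rw [hg1]
    exact ((hgfiber ⟨e (k + 1), hbk1⟩ (j : ℕ)).1 hg2).2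
  -- assemble
  refine ⟨⟨m, φ, χ⟩, ⟨hc_le_m, hm_le_b, hφsurj, hφmono, hχsurj, hχmono, hχφ, hsemi, hrev⟩, ?_⟩
  rintro ⟨m₂, φ₂, χ₂⟩ ⟨hc2, hb2, hφ₂s, hφ₂m, hχ₂s, hχ₂m, hγ2, hsemi2, hrev2⟩
  dsimp only at hc2 hb2 hφ₂s hφ₂m hχ₂s hχ₂m hγ2 hsemi2 hrev2
  have he₂0 : sf φ₂ 0 = 0 := sf_zero φ₂
  have he₂m : sf φ₂ m₂ = b := sf_top φ₂ le_rfl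
  have he₂strict : ∀ k, k < m₂ → sf φ₂ k < sf φ₂ (k + 1) := fun k hk => sf_lt hφ₂m hφ₂s hk
  have he₂le : ∀ k, sf φ₂ k ≤ b := fun k => sf_le φ₂ k
  have he₂mono : Monotone (sf φ₂) := sf_mono φ₂
  have hm₂pos : 0 < m₂ := by omega
  have hgcomp : ∀ j, sf γ j = sf φ₂ (sf χ₂ j) := by
    intro j
    have hγeq : γ = fun i => χ₂ (φ₂ i) := funext hγ2
    rw [hγeq]
    exact sf_comp hχ₂m φ₂ j
  have hSS2 : ∀ k, k < m₂ → SSb τ (toSeq μ) (sf φ₂ k) (sf φ₂ (k + 1)) := by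
    intro k hk
    have hmemk : ∀ i : Fin b, i ∈ Finset.univ.filter (fun i : Fin b => φ₂ i = (⟨k, hk⟩ : Fin m₂)) ↔
        sf φ₂ k ≤ (i : ℕ) ∧ (i : ℕ) < sf φ₂ (k + 1) := by
      intro i
      rw [Finset.mem_filter]
      simp only [Finset.mem_univ, true_and]
      rw [Fin.ext_iff]
      exact fiber_iff hφ₂m i k
    exact (semistable_iff τ μ (he₂le (k + 1)) (he₂mono (Nat.le_succ k)) hmemk).1 (hsemi2 ⟨k, hk⟩)
  have hval₂ : ∀ t, (ht : t < m₂) →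
      toSeq (fun k : Fin m₂ => ∑ i ∈ Finset.univ.filter (fun i : Fin b => φ₂ i = k), μ i) t
        = bS (toSeq μ) (sf φ₂ t) (sf φ₂ (t + 1)) := by
    intro t ht
    rw [toSeq, dif_pos ht]
    refine sum_interval μ (he₂le _) ?_
    intro i
    rw [Finset.mem_filter]
    simp only [Finset.mem_univ, true_and]
    rw [Fin.ext_iff]
    exact fiber_iff hφ₂m i t
  have hRev2 : ∀ k, (hk : k + 1 < m₂) → χ₂ ⟨k, by omega⟩ = χ₂ ⟨k + 1, hk⟩ →
      τ (bS (toSeq μ) (sf φ₂ (k + 1)) (sf φ₂ (k + 1 + 1))) <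
        τ (bS (toSeq μ) (sf φ₂ k) (sf φ₂ (k + 1))) := by
    intro k hk hsame
    have hmemj : ∀ k' : Fin m₂,
        k' ∈ Finset.univ.filter (fun k' : Fin m₂ => χ₂ k' = χ₂ ⟨k + 1, hk⟩) ↔
        sf χ₂ ((χ₂ ⟨k + 1, hk⟩ : Fin c) : ℕ) ≤ (k' : ℕ) ∧
          (k' : ℕ) < sf χ₂ (((χ₂ ⟨k + 1, hk⟩ : Fin c) : ℕ) + 1) := by
      intro k'
      rw [Finset.mem_filter]
      simp only [Finset.mem_univ, true_and]
      rw [Fin.ext_iff]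
      exact fiber_iff hχ₂m k' _
    have hmain := (reversing_iff τ _ (sf_le χ₂ _) (sf_mono χ₂ (Nat.le_succ _)) hmemj).1
      (hrev2 (χ₂ ⟨k + 1, hk⟩))
    have hf1 : sf χ₂ ((χ₂ ⟨k + 1, hk⟩ : Fin c) : ℕ) ≤ k ∧
        k < sf χ₂ (((χ₂ ⟨k + 1, hk⟩ : Fin c) : ℕ) + 1) :=
      (fiber_iff hχ₂m (⟨k, by omega⟩ : Fin m₂) ((χ₂ ⟨k + 1, hk⟩ : Fin c) : ℕ)).1
      (by rw [hsame])
    have hf2 : sf χ₂ ((χ₂ ⟨k + 1, hk⟩ : Fin c) : ℕ) ≤ k + 1 ∧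
        k + 1 < sf χ₂ (((χ₂ ⟨k + 1, hk⟩ : Fin c) : ℕ) + 1) :=
      (fiber_iff hχ₂m (⟨k + 1, hk⟩ : Fin m₂) ((χ₂ ⟨k + 1, hk⟩ : Fin c) : ℕ)).1 rfl
    have := hmain k hf1.1 hf2.2
    rwa [hval₂ k (by omega), hval₂ (k + 1) hk] at this
  -- each cut of the second partition is the greedy cut
  have hstep : ∀ k, k < m₂ → sf φ₂ (k + 1) = nc (sf φ₂ k) := by
    intro k hk
    have hab : sf φ₂ k < b := lt_of_lt_of_le (he₂strict k hk) (he₂le _)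
    have hφ₂a : φ₂ ⟨sf φ₂ k, hab⟩ = ⟨k, hk⟩ := by
      apply Fin.ext
      refine (fiber_iff hφ₂m _ _).2 ⟨le_rfl, he₂strict k hk⟩
    have hj0 : (γ ⟨sf φ₂ k, hab⟩ : ℕ) = ((χ₂ ⟨k, hk⟩ : Fin c) : ℕ) := by
      rw [hγ2 ⟨sf φ₂ k, hab⟩, hφ₂a]
    have hFa : F (sf φ₂ k) = sf γ ((γ ⟨sf φ₂ k, hab⟩ : ℕ) + 1) := hFval _ hab
    have hkfib : sf χ₂ ((χ₂ ⟨k, hk⟩ : Fin c) : ℕ) ≤ k ∧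
        k < sf χ₂ (((χ₂ ⟨k, hk⟩ : Fin c) : ℕ) + 1) :=
      (fiber_iff hχ₂m (⟨k, hk⟩ : Fin m₂) ((χ₂ ⟨k, hk⟩ : Fin c) : ℕ)).1 rfl
    have hi : sf φ₂ (k + 1) ≤ F (sf φ₂ k) := by
      rw [hFa, hgcomp, hj0]
      exact he₂mono hkfib.2
    have hii : sf φ₂ (k + 1) ≤ nc (sf φ₂ k) := hncmax _ _ hi (hSS2 k hk)
    rcases Nat.eq_or_lt_of_le hii with heq | hlt'
    · exact heq
    exfalso
    have hNF : nc (sf φ₂ k) ≤ F (sf φ₂ k) := hncle _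
    have hNb : nc (sf φ₂ k) ≤ b := le_trans hNF (hFle _)
    have hSSaN : SSb τ (toSeq μ) (sf φ₂ k) (nc (sf φ₂ k)) := hncSS _ hab
    have hexK : ∃ t, nc (sf φ₂ k) ≤ sf φ₂ t := ⟨m₂, by rw [he₂m]; exact hNb⟩
    have ht0spec : nc (sf φ₂ k) ≤ sf φ₂ (Nat.find hexK) := Nat.find_spec hexK
    have ht0le : Nat.find hexK ≤ m₂ := Nat.find_min' hexK (by rw [he₂m]; exact hNb)
    have ht0pos : k + 2 ≤ Nat.find hexK := by
      by_contra hcon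
      push_neg at hcon
      have : sf φ₂ (Nat.find hexK) ≤ sf φ₂ (k + 1) := he₂mono (by omega)
      omega
    obtain ⟨K, hKdef⟩ : ∃ K, Nat.find hexK = K + 1 := ⟨Nat.find hexK - 1, by omega⟩
    have hKlt : K < m₂ := by omega
    have hK1 : sf φ₂ K < nc (sf φ₂ k) := by
      have hmin := Nat.find_min hexK (show K < Nat.find hexK by omega)
      omega
    have hK2 : nc (sf φ₂ k) ≤ sf φ₂ (K + 1) := by rw [← hKdef]; exact ht0spec
    have hKk : k + 1 ≤ K := by omega
    have hfiber_all : ∀ k', k ≤ k' → (h2 : k' ≤ K) →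
        ((χ₂ ⟨k', by omega⟩ : Fin c) : ℕ) = ((χ₂ ⟨k, hk⟩ : Fin c) : ℕ) := by
      intro k' h1 h2
      refine (fiber_iff hχ₂m _ _).2 ⟨le_trans hkfib.1 h1, ?_⟩
      show k' < sf χ₂ (((χ₂ ⟨k, hk⟩ : Fin c) : ℕ) + 1)
      have h3 : nc (sf φ₂ k) ≤ sf φ₂ (sf χ₂ (((χ₂ ⟨k, hk⟩ : Fin c) : ℕ) + 1)) := by
        rw [← hgcomp, ← hj0, ← hFa]
        exact hNF
      by_contra hcon
      push_neg at hcon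
      have h4 : sf φ₂ (sf χ₂ (((χ₂ ⟨k, hk⟩ : Fin c) : ℕ) + 1)) ≤ sf φ₂ K :=
        he₂mono (by omega)
      omega
    -- the chain bound
    have hQ : ∀ d k', k < k' → k' ≤ K → K - k' = d →
        τ (bS (toSeq μ) (sf φ₂ k') (nc (sf φ₂ k))) ≤
          τ (bS (toSeq μ) (sf φ₂ k') (sf φ₂ (k' + 1))) := by
      intro d
      induction d with
      | zero =>
        intro k' h1 h2 h3
        have hk'K : k' = K := by omega
        subst hk'K
        rcases Nat.eq_or_lt_of_le hK2 with h | h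
        · rw [h]
        · exact (ss_prefix hτ hC (hνCr _ _ (he₂le (k' + 1))) (hSS2 k' (by omega)) hK1 h).1
      | succ d ih =>
        intro k' h1 h2 h3
        have hk'K : k' < K := by omega
        have hk'm : k' + 1 < m₂ := by omega
        have hlt2 : sf φ₂ (k' + 1) < nc (sf φ₂ k) := by
          have : sf φ₂ (k' + 1) ≤ sf φ₂ K := he₂mono (by omega)
          omega
        have hmax := mid_le_max hτ hC (hνCr (sf φ₂ k') (nc (sf φ₂ k)) hNb)
          (he₂strict k' (by omega)) hlt2
        have hihv := ih (k' + 1) (by omega) (by omega) (by omega)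
        have hrevp := hRev2 k' hk'm (Fin.ext
          ((hfiber_all k' (by omega) (by omega)).trans
            (hfiber_all (k' + 1) (by omega) (by omega)).symm))
        calc τ (bS (toSeq μ) (sf φ₂ k') (nc (sf φ₂ k)))
            ≤ max (τ (bS (toSeq μ) (sf φ₂ k') (sf φ₂ (k' + 1))))
                (τ (bS (toSeq μ) (sf φ₂ (k' + 1)) (nc (sf φ₂ k)))) := hmax
          _ ≤ τ (bS (toSeq μ) (sf φ₂ k') (sf φ₂ (k' + 1))) :=
              max_le le_rfl (le_of_lt (lt_of_le_of_lt hihv hrevp))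
    have hQ1 := hQ (K - (k + 1)) (k + 1) (by omega) hKk rfl
    have hrevk := hRev2 k (by omega) (Fin.ext
      ((hfiber_all k le_rfl (by omega)).trans
        (hfiber_all (k + 1) (by omega) hKk).symm))
    have hcut := hSSaN (sf φ₂ (k + 1)) (he₂strict k hk) hlt'
    exact absurd (lt_of_le_of_lt (le_trans hcut hQ1) hrevk) (lt_irrefl _)
  -- conclude the cut sequences agree
  have heall : ∀ k, k ≤ m₂ → sf φ₂ k = e k := by
    intro k hk
    induction k with
    | zero => rw [he₂0, he0]
    | succ k ih =>
      rw [hstep k (by omega), ih (by omega), ← hesucc]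
  have hm2m : m₂ = m := by
    have h1 : e m₂ = b := by rw [← heall m₂ le_rfl]; exact he₂m
    have hmle : m ≤ m₂ := Nat.find_min' hex h1
    rcases Nat.eq_or_lt_of_le hmle with h | h
    · omega
    · exfalso
      have h2 : sf φ₂ m = e m := heall m (by omega)
      rw [hem] at h2
      have h3 := he₂strict m h
      have h4 := he₂le (m + 1)
      omega
  subst hm2m
  have hφeq : φ₂ = φ := by
    apply eq_of_sf_eq hφ₂m hφmono
    intro k
    rw [hsfφ k]
    rcases le_or_gt k m with hk | hk
    · rw [if_pos hk]
      exact heall k hk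
    · rw [if_neg (by omega)]
      exact sf_top φ₂ (by omega)
  have hχeq : χ₂ = χ := by
    funext k
    obtain ⟨i, hi⟩ := hφsurj k
    have h1 : χ₂ (φ₂ i) = γ i := (hγ2 i).symm
    rw [hφeq, hi] at h1
    rw [h1, hχφ i, hi]
  rw [hφeq, hχeq]
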